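/- One-step cost bound for Follow-the-Prediction in online matching: let Φ_i = dist(S_i, P_i) be the potential after round i, where S_i is FtP's matched-server set and P_i the predicted set. If FtP matches request r_{i+1} to μ_i(s), where s ∈ P_{i+1}∖P_i is the server matched to r_{i+1} in a min-cost matching between P_{i+1} and the multiset P_i ∪ {r_{i+1}}, and μ_i is an optimal matching between S_i and P_i extended by identity outside S_i ∪ P_i, then d(r_{i+1}, μ_i(s)) + Φ_{i+1} ≤ dist(P_{i+1}, P_i ∪ {r_{i+1}}) + Φ_i. -/

import Mathlib

/-- Min-cost perfect matching (earth-mover) distance between two finite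
multisets of points of a metric space: the infimum over simultaneous
enumerations of the sum of distances of matched pairs. -/
noncomputable def mdistM {α : Type*} [MetricSpace α] (s t : Multiset α) : ℝ :=
  sInf {c | ∃ l₁ l₂ : List α, (l₁ : Multiset α) = s ∧ (l₂ : Multiset α) = t ∧
    c = (List.zipWith dist l₁ l₂).sum}

section FtpAux

open List

variable {α : Type*} [MetricSpace α]

lemma zipsum_nonneg (l₁ l₂ : List α) : 0 ≤ (List.zipWith dist l₁ l₂).sum := by
  induction l₁ generalizing l₂ with
  | nil => simp
  | cons a t ih =>
    cases l₂ with
    | nil => simp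
    | cons b t₂ => simpa using add_nonneg dist_nonneg (ih t₂)

lemma mdist_set_def (s t : Multiset α) : True := trivial

lemma mdist_nonempty (s t : Multiset α) :
    Set.Nonempty {c | ∃ l₁ l₂ : List α, (l₁ : Multiset α) = s ∧ (l₂ : Multiset α) = t ∧
      c = (List.zipWith dist l₁ l₂).sum} := by
  obtain ⟨l₁, rfl⟩ := Quotient.exists_rep s
  obtain ⟨l₂, rfl⟩ := Quotient.exists_rep t
  exact ⟨_, l₁, l₂, rfl, rfl, rfl⟩

lemma mdist_bdd (s t : Multiset α) :
    BddBelow {c | ∃ l₁ l₂ : List α, (l₁ : Multiset α) = s ∧ (l₂ : Multiset α) = t ∧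
      c = (List.zipWith dist l₁ l₂).sum} := by
  refine ⟨0, ?_⟩
  rintro c ⟨l₁, l₂, -, -, rfl⟩
  exact zipsum_nonneg l₁ l₂

lemma mdistM_le {s t : Multiset α} (l₁ l₂ : List α) (h₁ : (l₁ : Multiset α) = s)
    (h₂ : (l₂ : Multiset α) = t) : mdistM s t ≤ (List.zipWith dist l₁ l₂).sum :=
  csInf_le (mdist_bdd s t) ⟨l₁, l₂, h₁, h₂, rfl⟩

lemma mdistM_comm (s t : Multiset α) : mdistM s t = mdistM t s := by
  unfold mdistM
  congr 1
  ext c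
  constructor <;> rintro ⟨l₁, l₂, h₁, h₂, rfl⟩
  · exact ⟨l₂, l₁, h₂, h₁, by rw [List.zipWith_comm_of_comm (f := dist) dist_comm]⟩
  · exact ⟨l₂, l₁, h₂, h₁, by rw [List.zipWith_comm_of_comm (f := dist) dist_comm]⟩

lemma mdistM_cons_le (x : α) (a b : Multiset α) :
    mdistM (x ::ₘ a) (x ::ₘ b) ≤ mdistM a b := by
  apply le_csInf (mdist_nonempty a b)
  rintro c ⟨l₁, l₂, h₁, h₂, rfl⟩
  have := mdistM_le (s := x ::ₘ a) (t := x ::ₘ b) (x :: l₁) (x :: l₂)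
    (by rw [← h₁]; exact (Multiset.cons_coe x l₁).symm) (by rw [← h₂]; exact (Multiset.cons_coe x l₂).symm)
  simpa using this
lemma exists_perm_zip {β : Type*} {l₂' l₂ : List α} (h : l₂' ~ l₂) :
    ∀ l₃ : List β, l₂'.length = l₃.length →
      ∃ l₃' : List β, l₂.zip l₃' ~ l₂'.zip l₃ ∧ l₃'.length = l₂.length := by
  induction h with
  | nil =>
    intro l₃ hl
    exact ⟨[], by simp, by simp⟩
  | cons x h ih =>
    intro l₃ hl
    cases l₃ with
    | nil => simp at hl
    | cons y t₃ =>
      obtain ⟨l₃', hp, hlen⟩ := ih t₃ (by simpa using hl)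
      exact ⟨y :: l₃', by simpa using hp.cons (x, y), by simpa using hlen⟩
  | swap x y l =>
    intro l₃ hl
    match l₃ with
    | a :: b :: t =>
      exact ⟨b :: a :: t, by simpa using List.Perm.swap (y, a) (x, b) (l.zip t), by simpa using hl.symm⟩
  | trans h₁ h₂ ih₁ ih₂ =>
    intro l₃ hl
    obtain ⟨lm, hpm, hlenm⟩ := ih₁ l₃ hl
    obtain ⟨l₃', hp, hlen⟩ := ih₂ lm hlenm.symm
    exact ⟨l₃', hp.trans hpm, hlen⟩

lemma zip_tri (l₁ l₂ l₃ : List α) (h12 : l₁.length = l₂.length) (h23 : l₂.length = l₃.length) :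
    (List.zipWith dist l₁ l₃).sum ≤
      (List.zipWith dist l₁ l₂).sum + (List.zipWith dist l₂ l₃).sum := by
  induction l₁ generalizing l₂ l₃ with
  | nil =>
    simpa using zipsum_nonneg l₂ l₃
  | cons a t ih =>
    match l₂, l₃, h12, h23 with
    | b :: t₂, c :: t₃, h12, h23 =>
      simp only [List.zipWith_cons_cons, List.sum_cons]
      have := ih t₂ t₃ (by simpa using h12) (by simpa using h23)
      have htri := dist_triangle a b c
      linarith

lemma mdistM_triangle (a b c : Multiset α) (hab : Multiset.card a = Multiset.card b)
    (hbc : Multiset.card b = Multiset.card c) : mdistM a c ≤ mdistM a b + mdistM b c := by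
  have key : ∀ x ∈ {c_1 | ∃ l₁ l₂ : List α, (l₁ : Multiset α) = a ∧ (l₂ : Multiset α) = b ∧
      c_1 = (List.zipWith dist l₁ l₂).sum},
      ∀ y ∈ {c_1 | ∃ l₁ l₂ : List α, (l₁ : Multiset α) = b ∧ (l₂ : Multiset α) = c ∧
      c_1 = (List.zipWith dist l₁ l₂).sum}, mdistM a c ≤ x + y := by
    rintro x ⟨l₁, l₂, h₁, h₂, rfl⟩ y ⟨l₂', l₃, h₂', h₃, rfl⟩
    have hperm : l₂' ~ l₂ := Multiset.coe_eq_coe.mp (h₂'.trans h₂.symm)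
    have hl23 : l₂'.length = l₃.length := by
      have e1 : (l₂' : Multiset α).card = (l₃ : Multiset α).card := by rw [h₂', h₃, hbc]
      simpa using e1
    obtain ⟨l₃', hp, hlen⟩ := exists_perm_zip hperm l₃ hl23
    have h₃' : (l₃' : Multiset α) = c := by
      have : l₃' ~ l₃ := by
        have := hp.map Prod.snd
        rwa [List.map_snd_zip (l₁ := l₂) (l₂ := l₃') (le_of_eq hlen),
          List.map_snd_zip (l₁ := l₂') (l₂ := l₃) (le_of_eq hl23.symm)] at this
      rw [Multiset.coe_eq_coe.mpr this, h₃]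
    have hsum : (List.zipWith dist l₂ l₃').sum = (List.zipWith dist l₂' l₃).sum := by
      have e := hp.map (Function.uncurry dist)
      rw [List.map_uncurry_zip_eq_zipWith, List.map_uncurry_zip_eq_zipWith] at e
      exact e.sum_eq
    have hlen12 : l₁.length = l₂.length := by
      have e1 : (l₁ : Multiset α).card = (l₂ : Multiset α).card := by rw [h₁, h₂, hab]
      simpa using e1
    calc mdistM a c ≤ (List.zipWith dist l₁ l₃').sum := mdistM_le l₁ l₃' h₁ h₃'
      _ ≤ (List.zipWith dist l₁ l₂).sum + (List.zipWith dist l₂ l₃').sum :=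
          zip_tri l₁ l₂ l₃' hlen12 hlen.symm
      _ = _ := by rw [hsum]
  have h1 : mdistM a c - mdistM b c ≤ mdistM a b := by
    apply le_csInf (mdist_nonempty a b)
    rintro x hx
    rw [sub_le_iff_le_add, ← sub_le_iff_le_add']
    apply le_csInf (mdist_nonempty b c)
    intro y hy
    rw [sub_le_iff_le_add']
    exact key x hx y hy
  linarith
lemma toList_map_sum [DecidableEq α] (t : Finset α) (f : α → ℝ) :
    ((t.toList.map f)).sum = ∑ x ∈ t, f x := by
  rw [← Multiset.sum_coe, ← Multiset.map_coe, Finset.coe_toList]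
  rfl

lemma self_match_sum [DecidableEq α] (t : Finset α) (μ : α → α) :
    (List.zipWith dist t.toList (t.toList.map μ)).sum = ∑ x ∈ t, dist x (μ x) := by
  rw [List.zipWith_map_right, List.zipWith_self, toList_map_sum]


end FtpAux

/-- **One-step cost bound for Follow-the-Prediction in online matching.**
`Si` and `Pi` are FtP's and the predictor's server sets after round `i`
(both of size `i`), `Pi1` is the prediction for round `i+1`, `r` the new
request, `s ∈ Pi1 ∖ Pi` the server matched to `r` in a min-cost matching
between `Pi1` and `Pi ∪ {r}`, and `μ` an optimal matching between `Si` and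
`Pi`, fixing `Si ∩ Pi` pointwise and extended by the identity outside
`Si ∪ Pi`. FtP matches `r` to `μ s ∉ Si`, so `S_{i+1} = Si ∪ {μ s}` and, with
`Φ_i = dist(S_i, P_i)`,
`d(r, μ s) + Φ_{i+1} ≤ dist(P_{i+1}, P_i ∪ {r}) + Φ_i`. -/
theorem ftp_matching_step {α : Type*} [MetricSpace α] [DecidableEq α] (i : ℕ)
    (Si Pi Pi1 : Finset α) (r s : α) (μ : α → α)
    (hSi : Si.card = i) (hPi : Pi.card = i) (hPi1 : Pi1.card = i + 1)
    (hsmem : s ∈ Pi1) (hsnot : s ∉ Pi)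
    (hsplit : mdistM (Pi1.val) (Pi.val + {r}) =
      dist s r + mdistM ((Pi1.erase s).val) (Pi.val))
    (hbij : Set.BijOn μ ↑Si ↑Pi)
    (hfix : ∀ x ∈ Si ∩ Pi, μ x = x)
    (hext : ∀ x, x ∉ Si → x ∉ Pi → μ x = x)
    (hopt : ∑ x ∈ Si, dist x (μ x) = mdistM Si.val Pi.val)
    (hμs : μ s ∉ Si) :
    dist r (μ s) + mdistM ((insert (μ s) Si).val) (Pi1.val) ≤
      mdistM (Pi1.val) (Pi.val + {r}) + mdistM (Si.val) (Pi.val) := by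
  classical
  -- the image fact
  have himg : Finset.image μ Si = Pi := by
    apply Finset.coe_injective
    rw [Finset.coe_image, hbij.image_eq]
  have hmap : Multiset.map μ Si.val = Pi.val := by
    rw [← Finset.image_val_of_injOn hbij.injOn, himg]
  -- Step A: mdistM (insert (μ s) Si).val (Pi.val + {s}) + dist s (μ s) ≤ Φ_i
  have hA : mdistM ((insert (μ s) Si).val) (Pi.val + {s}) + dist s (μ s) ≤
      ∑ x ∈ Si, dist x (μ x) := by
    by_cases hs : s ∈ Si
    · -- s ∈ Si, μ s ∈ Pi
      set L := (Si.erase s).toList with hL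
      have hVal : s ::ₘ (Si.erase s).val = Si.val := by
        rw [Finset.erase_val, Multiset.cons_erase (Finset.mem_def.mp hs)]
      have hmap' : μ s ::ₘ Multiset.map μ (Si.erase s).val = Pi.val := by
        rw [← Multiset.map_cons, hVal, hmap]
      have hle := mdistM_le (s := (insert (μ s) Si).val) (t := Pi.val + {s})
        (s :: μ s :: L) (s :: μ s :: L.map μ) ?_ ?_
      · have hcost : (List.zipWith dist (s :: μ s :: L) (s :: μ s :: L.map μ)).sum
            = ∑ x ∈ Si.erase s, dist x (μ x) := by
          simp only [List.zipWith_cons_cons, List.sum_cons, dist_self, zero_add, hL]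
          exact self_match_sum (Si.erase s) μ
        have hsum : ∑ x ∈ Si.erase s, dist x (μ x) + dist s (μ s) = ∑ x ∈ Si, dist x (μ x) :=
          Finset.sum_erase_add Si _ hs
        rw [hcost] at hle
        linarith
      · show ((s :: μ s :: L : List α) : Multiset α) = _
        rw [← Multiset.cons_coe, ← Multiset.cons_coe, hL, Finset.coe_toList,
          Finset.insert_val_of_notMem hμs, Multiset.cons_swap, hVal]
      · show ((s :: μ s :: L.map μ : List α) : Multiset α) = _
        rw [← Multiset.cons_coe, ← Multiset.cons_coe, hL, ← Multiset.map_coe, Finset.coe_toList,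
          hmap', ← Multiset.singleton_add, add_comm]
    · -- s ∉ Si, so μ s = s
      have hfixs : μ s = s := hext s hs hsnot
      have hle := mdistM_le (s := (insert (μ s) Si).val) (t := Pi.val + {s})
        (s :: Si.toList) (s :: Si.toList.map μ) ?_ ?_
      · rw [List.zipWith_cons_cons, List.sum_cons, dist_self, zero_add,
          self_match_sum Si μ] at hle
        have : dist s (μ s) = 0 := by rw [hfixs, dist_self]
        linarith
      · show ((s :: Si.toList : List α) : Multiset α) = _
        rw [← Multiset.cons_coe, Finset.coe_toList, Finset.insert_val_of_notMem hμs, hfixs]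
      · show ((s :: Si.toList.map μ : List α) : Multiset α) = _
        rw [← Multiset.cons_coe, ← Multiset.map_coe, Finset.coe_toList, hmap,
          ← Multiset.singleton_add, add_comm]
  -- Step B: triangle through Pi.val + {s}
  have hcard1 : Multiset.card ((insert (μ s) Si).val) = i + 1 := by
    rw [← Finset.card_def, Finset.card_insert_of_notMem hμs, hSi]
  have hcard2 : Multiset.card (Pi.val + {s}) = i + 1 := by
    simp [← Finset.card_def, hPi]
  have hcard3 : Multiset.card (Pi1.val) = i + 1 := by
    rw [← Finset.card_def, hPi1]
  have ht := mdistM_triangle ((insert (μ s) Si).val) (Pi.val + {s}) (Pi1.val)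
    (by rw [hcard1, hcard2]) (by rw [hcard2, hcard3])
  -- Step C: dropping the common point s
  have hPi1val : s ::ₘ (Pi1.erase s).val = Pi1.val := by
    rw [Finset.erase_val, Multiset.cons_erase (Finset.mem_def.mp hsmem)]
  have hC : mdistM (Pi.val + {s}) (Pi1.val) ≤ mdistM (Pi.val) ((Pi1.erase s).val) := by
    have : Pi.val + {s} = s ::ₘ Pi.val := by rw [← Multiset.singleton_add, add_comm]
    rw [this, ← hPi1val]
    exact mdistM_cons_le s _ _
  have hcomm : mdistM (Pi.val) ((Pi1.erase s).val) = mdistM ((Pi1.erase s).val) (Pi.val) :=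
    mdistM_comm _ _
  have htri : dist r (μ s) ≤ dist s r + dist s (μ s) := by
    rw [dist_comm s r]; exact dist_triangle r s (μ s)
  rw [hsplit, ← hopt]
  linarith
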